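/- Let n be a positive even integer and F_0,…,F_{n+1} complete oriented flags in ℝⁿ. Then there exist vectors x_0,…,x_{n+1} ∈ ℝⁿ such that ori([F_0,…,F̂_i,…,F̂_j,…,F_{n+1}]) = ori(x_0,…,x̂_i,…,x̂_j,…,x_{n+1}) for every pair 0 ≤ i < j ≤ n+1 (hats denote omission). -/

import Mathlib

noncomputable section

/-- Sign of the determinant of the matrix whose columns are `v 0, …, v (n-1)`. -/
def oriV {n : ℕ} (v : Fin n → (Fin n → ℝ)) : ℝ :=
  Real.sign (Matrix.det (Matrix.of fun i j => v j i))

open Classical in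
/-- We represent a complete oriented flag `F` in `ℝⁿ` by a basis `(F 0, …, F (n-1))`:
the flag is `Fⁱ = span(F 0, …, F (i-1))`, oriented by this basis, with the positive
half-space `(Fⁱ)⁺` the one containing `F (i-1)`.  Two bases represent the same
oriented flag iff the transition matrix is upper triangular with positive diagonal.

Given a tuple `W` representing an oriented subspace `⟨W 0, …, W (k-1)⟩` and a flag `F`,
`extVec W F` is the first vector `F d` of the flag not contained in `span W`; it is a
vector of the positive half-space `(F^{d+1})⁺`, so `snoc W (extVec W F)` represents the
oriented subspace `[⟨W⟩, F]` of Bucher–Monod. -/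
def extVec {n k : ℕ} (W : Fin k → (Fin n → ℝ)) (F : Fin n → (Fin n → ℝ)) : Fin n → ℝ :=
  if h : ∃ j, F j ∉ Submodule.span ℝ (Set.range W) then
    F (Fin.find (fun j => F j ∉ Submodule.span ℝ (Set.range W)) h)
  else 0

/-- `bracket (F_1, …, F_k)` is (the canonical representing tuple of) the oriented
`k`-dimensional subspace `[F_1, …, F_k]`, defined inductively by `[F_1] = F_1¹` and
`[F_1,…,F_k] = [[F_1,…,F_{k-1}], F_k]`. -/
def bracket {n : ℕ} : {k : ℕ} → (Fin k → (Fin n → (Fin n → ℝ))) → (Fin k → (Fin n → ℝ))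
  | 0, _ => Fin.elim0
  | (_ + 1), Fs =>
      Fin.snoc (bracket (Fs ∘ Fin.castSucc))
        (extVec (bracket (Fs ∘ Fin.castSucc)) (Fs (Fin.last _)))

/-- `coco(F_0,…,F_n) = ∏_{i=0}^{n} ori([F_0,…,F̂_i,…,F_n])`. -/
def coco {n : ℕ} (Fs : Fin (n + 1) → (Fin n → (Fin n → ℝ))) : ℝ :=
  ∏ i : Fin (n + 1), oriV (bracket (Fs ∘ i.succAbove))

open Classical in
lemma extVec_eq {n k : ℕ} (W : Fin k → (Fin n → ℝ)) (F : Fin n → (Fin n → ℝ)) {j₀ : Fin n}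
    (h : F j₀ ∉ Submodule.span ℝ (Set.range W))
    (hmin : ∀ j : Fin n, j < j₀ → F j ∈ Submodule.span ℝ (Set.range W)) :
    extVec W F = F j₀ := by
  have hex : ∃ j, F j ∉ Submodule.span ℝ (Set.range W) := ⟨j₀, h⟩
  have hfind : Fin.find (fun j => F j ∉ Submodule.span ℝ (Set.range W)) hex = j₀ := by
    rw [Fin.find_eq_iff]
    exact ⟨h, fun j hj => not_not.2 (hmin j hj)⟩
  unfold extVec
  rw [dif_pos hex]
  exact congrArg F hfind

lemma bracket_succ {n k : ℕ} (G : Fin (k+1) → (Fin n → (Fin n → ℝ))) :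
    bracket G = Fin.snoc (bracket (G ∘ Fin.castSucc))
      (extVec (bracket (G ∘ Fin.castSucc)) (G (Fin.last _))) := rfl

lemma bracket_spec {n : ℕ} : ∀ (k : ℕ), k ≤ n → ∀ (G : Fin k → (Fin n → (Fin n → ℝ))),
    (∀ m, LinearIndependent ℝ (G m)) →
    ∃ d : Fin k → Fin n,
      (∀ m, bracket G m = G m (d m)) ∧
      LinearIndependent ℝ (fun m => G m (d m)) ∧
      (∀ (m : Fin k) (j : Fin n), j < d m →
        G m j ∈ Submodule.span ℝ ((fun m' => G m' (d m')) '' {m' | m' < m})) := by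
  intro k
  induction k with
  | zero =>
    intro _ G _
    refine ⟨Fin.elim0, fun m => m.elim0, ?_, fun m => m.elim0⟩
    exact linearIndependent_empty_type
  | succ k IH =>
    intro hk G hG
    obtain ⟨d', h1, h2, h3⟩ := IH (Nat.le_of_succ_le hk) (G ∘ Fin.castSucc)
      (fun m => hG _)
    -- range of bracket of the initial segment
    have hrange : Set.range (bracket (G ∘ Fin.castSucc))
        = Set.range (fun m => G (Fin.castSucc m) (d' m)) := by
      rw [show bracket (G ∘ Fin.castSucc) = fun m => G (Fin.castSucc m) (d' m) from
        funext h1]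
    set S := Submodule.span ℝ (Set.range (bracket (G ∘ Fin.castSucc))) with hS
    -- there is a flag vector outside S
    have hex : ∃ j : Fin n, G (Fin.last k) j ∉ S := by
      by_contra hno
      push_neg at hno
      have htop : Submodule.span ℝ (Set.range (G (Fin.last k))) = ⊤ := by
        have : Nonempty (Fin n) := ⟨⟨0, Nat.lt_of_lt_of_le (Nat.succ_pos k) hk⟩⟩
        exact (hG (Fin.last k)).span_eq_top_of_card_eq_finrank
          (by simp [Module.finrank_fin_fun])
      have hSinf : S = ⊤ := by
        rw [eq_top_iff, ← htop]
        exact Submodule.span_le.2 (Set.range_subset_iff.2 hno)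
      have hfr : Module.finrank ℝ S ≤ k := by
        have := finrank_span_le_card (R := ℝ) (Set.range (bracket (G ∘ Fin.castSucc)))
        refine le_trans this ?_
        rw [Set.toFinset_range]
        exact le_trans (Finset.card_image_le) (by simp)
      rw [hSinf] at hfr
      rw [finrank_top] at hfr
      rw [Module.finrank_fin_fun] at hfr
      omega
    obtain ⟨j₀, hj₀, hj₀min⟩ : ∃ j₀ : Fin n, G (Fin.last k) j₀ ∉ S ∧
        ∀ j : Fin n, j < j₀ → G (Fin.last k) j ∈ S := by
      classical
      obtain ⟨j, hj⟩ := hex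
      have hsome : ∃ j, G (Fin.last k) j ∉ S := ⟨j, hj⟩
      exact ⟨Fin.find _ hsome, Fin.find_spec hsome, fun j hlt => not_not.1 (Fin.find_min hsome hlt)⟩
    refine ⟨Fin.snoc d' j₀, ?_, ?_, ?_⟩
    · intro m
      refine Fin.lastCases ?_ ?_ m
      · rw [bracket_succ, Fin.snoc_last, Fin.snoc_last]
        exact extVec_eq _ _ hj₀ hj₀min
      · intro m₀
        rw [bracket_succ, Fin.snoc_castSucc, Fin.snoc_castSucc]
        exact h1 m₀
    · have hfun : (fun m : Fin (k+1) => G m (Fin.snoc (α := fun _ => Fin n) d' j₀ m))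
          = Fin.snoc (fun m => G (Fin.castSucc m) (d' m)) (G (Fin.last k) j₀) := by
        funext m
        induction m using Fin.lastCases with
        | last => simp
        | cast m₀ => simp
      rw [hfun, linearIndependent_fin_snoc]
      refine ⟨h2, ?_⟩
      rw [← hrange, ← hS]
      exact hj₀
    · intro m j
      refine Fin.lastCases ?_ ?_ m
      · intro hj
        rw [Fin.snoc_last] at hj
        have := hj₀min j hj
        rw [hS, hrange] at this
        refine Submodule.span_mono ?_ this
        rintro x ⟨m₀, rfl⟩
        exact ⟨Fin.castSucc m₀, Fin.castSucc_lt_last m₀, by simp⟩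
      · intro m₀ hj
        rw [Fin.snoc_castSucc] at hj
        have := h3 m₀ j hj
        refine Submodule.span_mono ?_ this
        rintro x ⟨m₁, hm₁, rfl⟩
        exact ⟨Fin.castSucc m₁, Fin.castSucc_lt_castSucc_iff.2 hm₁, by simp⟩

lemma oriV_eq {n : ℕ} (v : Fin n → (Fin n → ℝ)) :
    oriV v = Real.sign (Matrix.det (Matrix.of v)) := by
  rw [oriV, show (Matrix.of fun i j => v j i) = Matrix.transpose (Matrix.of v) from rfl,
    Matrix.det_transpose]

lemma det_expand {n : ℕ} (w : Fin n → ℕ) (G : Fin n → (Fin n → (Fin n → ℝ))) (s : ℝ) :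
    Matrix.det (Matrix.of fun k i => ∑ j : Fin n, s ^ (w k * (j : ℕ)) * G k j i)
      = ∑ J : Fin n → Fin n, (∏ k, s ^ (w k * (J k : ℕ)))
          * Matrix.det (Matrix.of fun k => G k (J k)) := by
  have h : (Matrix.of fun k i => ∑ j : Fin n, s ^ (w k * (j : ℕ)) * G k j i)
      = Matrix.of (fun k => ∑ j : Fin n, s ^ (w k * (j : ℕ)) • G k j) := by
    ext k i
    simp [Finset.sum_apply]
  rw [h]
  have h2 := (Matrix.detRowAlternating (R := ℝ) (n := Fin n)).toMultilinearMap.map_sum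
    (g := fun k (j : Fin n) => s ^ (w k * (j : ℕ)) • G k j)
  have h3 : ∀ J : Fin n → Fin n,
      (Matrix.detRowAlternating (R := ℝ) (n := Fin n)).toMultilinearMap
        (fun k => s ^ (w k * (J k : ℕ)) • G k (J k))
      = (∏ k, s ^ (w k * (J k : ℕ))) * Matrix.det (Matrix.of fun k => G k (J k)) := by
    intro J
    rw [MultilinearMap.map_smul_univ]
    rfl
  calc Matrix.det (Matrix.of (fun k => ∑ j : Fin n, s ^ (w k * (j : ℕ)) • G k j))
      = (Matrix.detRowAlternating (R := ℝ) (n := Fin n)).toMultilinearMap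
          (fun k => ∑ j : Fin n, s ^ (w k * (j : ℕ)) • G k j) := rfl
    _ = ∑ J : Fin n → Fin n, (Matrix.detRowAlternating (R := ℝ) (n := Fin n)).toMultilinearMap
          (fun k => s ^ (w k * (J k : ℕ)) • G k (J k)) := h2
    _ = _ := Finset.sum_congr rfl (fun J _ => h3 J)

lemma sum_split {n : ℕ} (k₀ : Fin n) (f : Fin n → ℕ) :
    ∑ m, f m = (∑ m ∈ Finset.Iio k₀, f m) + f k₀ + ∑ m ∈ Finset.Ioi k₀, f m := by
  have h : Finset.univ = (Finset.Iio k₀ ∪ {k₀}) ∪ Finset.Ioi k₀ := by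
    ext m
    simp only [Finset.mem_univ, Finset.mem_union, Finset.mem_Iio, Finset.mem_Ioi,
      Finset.mem_singleton, true_iff]
    rcases lt_trichotomy m k₀ with h | h | h
    · exact Or.inl (Or.inl h)
    · exact Or.inl (Or.inr h)
    · exact Or.inr h
  have hd2 : Disjoint (Finset.Iio k₀) ({k₀} : Finset (Fin n)) := by
    rw [Finset.disjoint_left]
    intro a ha hb
    rw [Finset.mem_Iio] at ha
    rw [Finset.mem_singleton] at hb
    exact absurd hb (ne_of_lt ha)
  have hd1 : Disjoint (Finset.Iio k₀ ∪ {k₀}) (Finset.Ioi k₀) := by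
    rw [Finset.disjoint_left]
    intro a ha hb
    rw [Finset.mem_Ioi] at hb
    rcases Finset.mem_union.1 ha with h' | h'
    · exact absurd hb (asymm (Finset.mem_Iio.1 h'))
    · rw [Finset.mem_singleton] at h'
      subst h'
      exact lt_irrefl _ hb
  rw [h, Finset.sum_union hd1, Finset.sum_union hd2, Finset.sum_singleton]


lemma key {n : ℕ} (w : Fin n → ℕ)
    (hw : ∀ k : Fin n, n * ∑ m ∈ Finset.Ioi k, w m < w k)
    (G : Fin n → (Fin n → (Fin n → ℝ))) (hG : ∀ m, LinearIndependent ℝ (G m)) :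
    ∃ ε : ℝ, 0 < ε ∧ ∀ s : ℝ, 0 < s → s < ε →
      oriV (bracket G)
        = oriV (fun k i => ∑ j : Fin n, s ^ (w k * (j : ℕ)) * G k j i) := by
  classical
  obtain ⟨d, hd1, hd2, hd3⟩ := bracket_spec n le_rfl G hG
  set a : (Fin n → Fin n) → ℝ := fun J => Matrix.det (Matrix.of fun k => G k (J k)) with ha
  set e : (Fin n → Fin n) → ℕ := fun J => ∑ k, w k * (J k : ℕ) with he
  have had : a d ≠ 0 := by
    have h1 : IsUnit (Matrix.of fun k => G k (d k)) :=
      Matrix.linearIndependent_rows_iff_isUnit.1 hd2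
    exact ((Matrix.isUnit_iff_isUnit_det _).1 h1).ne_zero
  have hlt : ∀ J : Fin n → Fin n, a J ≠ 0 → J ≠ d → e d < e J := by
    intro J haJ hJd
    set sdiff := Finset.univ.filter (fun k => J k ≠ d k) with hsdiff
    have hne : sdiff.Nonempty := by
      obtain ⟨k, hk⟩ := Function.ne_iff.1 hJd
      exact ⟨k, by simp [hsdiff, hk]⟩
    set k₀ := sdiff.min' hne with hk₀def
    have hk₀ : J k₀ ≠ d k₀ := (Finset.mem_filter.1 (sdiff.min'_mem hne)).2
    have hbefore : ∀ m, m < k₀ → J m = d m := by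
      intro m hm
      by_contra hne2
      exact absurd (Finset.min'_le sdiff m (by simp [hsdiff, hne2])) (not_le.2 hm)
    rcases lt_or_gt_of_ne hk₀ with hc | hc
    · exfalso
      have hmem := hd3 k₀ _ hc
      have himg : (fun m' => G m' (d m')) '' {m' | m' < k₀}
          = (fun m' => G m' (J m')) '' {m' | m' < k₀} :=
        (Set.image_congr (fun m hm => by rw [hbefore m hm])).symm
      rw [himg] at hmem
      have hli : LinearIndependent ℝ (fun k => G k (J k)) :=
        Matrix.linearIndependent_rows_iff_isUnit.2
          ((Matrix.isUnit_iff_isUnit_det _).2 (isUnit_iff_ne_zero.2 haJ))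
      exact (hli.notMem_span_image (by simp : k₀ ∉ {m' | m' < k₀})) hmem
    · rw [he]
      simp only
      rw [sum_split k₀ (fun m => w m * (d m : ℕ)), sum_split k₀ (fun m => w m * (J m : ℕ))]
      have h1 : ∑ m ∈ Finset.Iio k₀, w m * (d m : ℕ)
          = ∑ m ∈ Finset.Iio k₀, w m * (J m : ℕ) :=
        Finset.sum_congr rfl (fun m hm => by rw [hbefore m (Finset.mem_Iio.1 hm)])
      have h2 : ∑ m ∈ Finset.Ioi k₀, w m * (d m : ℕ) ≤ n * ∑ m ∈ Finset.Ioi k₀, w m := by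
        calc ∑ m ∈ Finset.Ioi k₀, w m * (d m : ℕ)
            ≤ ∑ m ∈ Finset.Ioi k₀, w m * n :=
              Finset.sum_le_sum (fun m _ => Nat.mul_le_mul_left _ (le_of_lt (d m).isLt))
          _ = n * ∑ m ∈ Finset.Ioi k₀, w m := by rw [← Finset.sum_mul, mul_comm]
      have h3 := hw k₀
      have h4 : w k₀ * (d k₀ : ℕ) + w k₀ ≤ w k₀ * (J k₀ : ℕ) := by
        have hval : (d k₀ : ℕ) + 1 ≤ (J k₀ : ℕ) := hc
        calc w k₀ * (d k₀ : ℕ) + w k₀ = w k₀ * ((d k₀ : ℕ) + 1) := by ring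
          _ ≤ w k₀ * (J k₀ : ℕ) := Nat.mul_le_mul_left _ hval
      omega
  set E := e d with hE
  have hEle : ∀ J : Fin n → Fin n, a J ≠ 0 → E ≤ e J := by
    intro J hJ
    rcases eq_or_ne J d with rfl | h
    · exact le_rfl
    · exact le_of_lt (hlt J hJ h)
  set Q : ℝ → ℝ := fun s => ∑ J : Fin n → Fin n, s ^ (e J - E) * a J with hQ
  have hQ0 : Q 0 = a d := by
    rw [hQ]
    simp only
    rw [Finset.sum_eq_single d]
    · show (0:ℝ) ^ (e d - E) * a d = a d
      rw [← hE, Nat.sub_self, pow_zero, one_mul]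
    · intro J _ hJd
      by_cases haJ : a J = 0
      · rw [haJ, mul_zero]
      · rw [zero_pow (by have := hlt J haJ hJd; omega), zero_mul]
    · intro h
      exact absurd (Finset.mem_univ d) h
  have hQcont : Continuous Q := by
    apply continuous_finset_sum
    intro J _
    exact (continuous_pow _).mul continuous_const
  obtain ⟨δ, hδ, hball⟩ := Metric.continuousAt_iff.1 (hQcont.continuousAt (x := 0))
    |a d| (abs_pos.2 had)
  refine ⟨δ, hδ, ?_⟩
  intro s hs hsδ
  have hQs : |Q s - a d| < |a d| := by
    have := hball (x := s) (by rw [Real.dist_eq, sub_zero]; rwa [abs_of_pos hs])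
    rwa [Real.dist_eq, hQ0] at this
  have hP : Matrix.det (Matrix.of fun k i => ∑ j : Fin n, s ^ (w k * (j : ℕ)) * G k j i)
      = s ^ E * Q s := by
    rw [det_expand, hQ]
    simp only
    rw [Finset.mul_sum]
    refine Finset.sum_congr rfl (fun J _ => ?_)
    rw [Finset.prod_pow_eq_pow_sum]
    by_cases haJ : a J = 0
    · have h0 : Matrix.det (Matrix.of fun k => G k (J k)) = 0 := haJ
      rw [h0, mul_zero, show a J = 0 from haJ, mul_zero, mul_zero]
    · have hEJ := hEle J haJ
      have hexp : E + (e J - E) = e J := by omega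
      calc s ^ (∑ k, w k * (J k : ℕ)) * Matrix.det (Matrix.of fun k => G k (J k))
          = s ^ (e J) * a J := rfl
        _ = s ^ (E + (e J - E)) * a J := by rw [hexp]
        _ = s ^ E * (s ^ (e J - E) * a J) := by rw [pow_add, mul_assoc]
  have hbr : bracket G = fun k => G k (d k) := funext hd1
  have hL : oriV (bracket G) = Real.sign (a d) := by
    rw [oriV_eq, hbr]
  have hR : oriV (fun k i => ∑ j : Fin n, s ^ (w k * (j : ℕ)) * G k j i)
      = Real.sign (s ^ E * Q s) := by
    rw [oriV_eq, hP]
  rw [hL, hR]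
  rcases had.lt_or_gt with hneg | hpos
  · have hQs0 : Q s < 0 := by
      have h' := abs_lt.1 hQs
      rw [abs_of_neg hneg] at h'
      linarith [h'.2]
    have hprod : s ^ E * Q s < 0 := mul_neg_of_pos_of_neg (pow_pos hs E) hQs0
    rw [Real.sign_of_neg hneg, Real.sign_of_neg hprod]
  · have hQs0 : 0 < Q s := by
      have h' := abs_lt.1 hQs
      rw [abs_of_pos hpos] at h'
      linarith [h'.1]
    have hprod : 0 < s ^ E * Q s := mul_pos (pow_pos hs E) hQs0
    rw [Real.sign_of_pos hpos, Real.sign_of_pos hprod]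


lemma weight_key (n : ℕ) (σ : Fin n → Fin (n+2)) (hσ : StrictMono σ) (k : Fin n) :
    n * ∑ m ∈ Finset.Ioi k, ((n+2)^2) ^ (n + 2 - (σ m : ℕ))
      < ((n+2)^2) ^ (n + 2 - (σ k : ℕ)) := by
  set M := (n+2)^2 with hM
  have hM0 : 0 < M := by positivity
  have hterm : ∀ m ∈ Finset.Ioi k, M ^ (n + 2 - (σ m : ℕ)) ≤ M ^ (n + 1 - (σ k : ℕ)) := by
    intro m hm
    apply Nat.pow_le_pow_right hM0
    have h1 : (σ k : ℕ) < (σ m : ℕ) := hσ (Finset.mem_Ioi.1 hm)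
    omega
  have hsum : ∑ m ∈ Finset.Ioi k, M ^ (n + 2 - (σ m : ℕ)) ≤ n * M ^ (n + 1 - (σ k : ℕ)) := by
    calc ∑ m ∈ Finset.Ioi k, M ^ (n + 2 - (σ m : ℕ))
        ≤ (Finset.Ioi k).card • M ^ (n + 1 - (σ k : ℕ)) := Finset.sum_le_card_nsmul _ _ _ hterm
      _ = (Finset.Ioi k).card * M ^ (n + 1 - (σ k : ℕ)) := by rw [smul_eq_mul]
      _ ≤ n * M ^ (n + 1 - (σ k : ℕ)) := by
          apply Nat.mul_le_mul_right
          exact le_trans (Finset.card_le_univ _) (by simp)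
  have hfin : (σ k : ℕ) < n + 2 := (σ k).isLt
  have hsplit : n + 2 - (σ k : ℕ) = (n + 1 - (σ k : ℕ)) + 1 := by omega
  have hpow : 0 < M ^ (n + 1 - (σ k : ℕ)) := pow_pos hM0 _
  calc n * ∑ m ∈ Finset.Ioi k, M ^ (n + 2 - (σ m : ℕ))
      ≤ n * (n * M ^ (n + 1 - (σ k : ℕ))) := Nat.mul_le_mul_left _ hsum
    _ = (n * n) * M ^ (n + 1 - (σ k : ℕ)) := by ring
    _ < M * M ^ (n + 1 - (σ k : ℕ)) := by
        have hnn : n * n < M := by rw [hM]; nlinarith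
        exact Nat.mul_lt_mul_of_lt_of_le hnn (le_refl _) hpow
    _ = M ^ (n + 2 - (σ k : ℕ)) := by rw [hsplit, pow_succ]; ring


/-- for complete oriented flags `F_0,…,F_{n+1}` there exist vectors
`x_0,…,x_{n+1}` with `ori([F_0,…,F̂_i,…,F̂_j,…,F_{n+1}]) = ori(x_0,…,x̂_i,…,x̂_j,…,x_{n+1})`
for every pair of omitted indices (every doubly-omitted subtuple being of the form
`F ∘ j.succAbove ∘ i.succAbove`). -/
theorem stmt11 (n : ℕ) (hn : 0 < n) (he : Even n)
    (Fs : Fin (n + 2) → (Fin n → (Fin n → ℝ))) (hFs : ∀ i, LinearIndependent ℝ (Fs i)) :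
    ∃ x : Fin (n + 2) → (Fin n → ℝ),
      ∀ (j : Fin (n + 2)) (i : Fin (n + 1)),
        oriV (bracket (Fs ∘ j.succAbove ∘ i.succAbove)) =
          oriV (x ∘ j.succAbove ∘ i.succAbove) := by
  classical
  set W : Fin (n+2) → ℕ := fun i => ((n+2)^2) ^ (n + 2 - (i : ℕ)) with hW
  have hkey : ∀ p : Fin (n+2) × Fin (n+1), ∃ ε : ℝ, 0 < ε ∧ ∀ s : ℝ, 0 < s → s < ε →
      oriV (bracket (Fs ∘ p.1.succAbove ∘ p.2.succAbove)) =
      oriV (fun k i => ∑ j : Fin n,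
        s ^ (W ((p.1.succAbove ∘ p.2.succAbove) k) * (j : ℕ))
          * Fs ((p.1.succAbove ∘ p.2.succAbove) k) j i) := by
    intro p
    apply key (w := fun k => W ((p.1.succAbove ∘ p.2.succAbove) k))
    · intro k
      exact weight_key n _
        ((Fin.strictMono_succAbove p.1).comp (Fin.strictMono_succAbove p.2)) k
    · intro m
      exact hFs _
  choose ε hε hgood using hkey
  have hne : (Finset.univ : Finset (Fin (n+2) × Fin (n+1))).Nonempty :=
    Finset.univ_nonempty
  set ε₀ := Finset.univ.inf' hne ε with hε₀def
  have hε₀ : 0 < ε₀ := by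
    rw [hε₀def, Finset.lt_inf'_iff]
    intro p _
    exact hε p
  have hs : 0 < ε₀ / 2 := by positivity
  refine ⟨fun i coord => ∑ j : Fin n, (ε₀ / 2) ^ (W i * (j : ℕ)) * Fs i j coord, ?_⟩
  intro j i
  have hlt : ε₀ / 2 < ε (j, i) := by
    have := Finset.inf'_le ε (Finset.mem_univ (j, i))
    rw [← hε₀def] at this
    linarith
  exact hgood (j, i) (ε₀ / 2) hs hlt

end
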